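/- Let G be a locally compact, second-countable Hausdorff topological group with left Haar measure μ (which has full support), let e denote its identity element, and let K : G × G → ℝ be continuous. Suppose the integral operator Φ(U)(g) = ∫_G K(g,q) U(q) dμ(q) commutes with the left-regular representation, i.e. for every continuous compactly supported U : G → ℝ and all g, g' ∈ G one has ∫_G K(g', q) U(g⁻¹ q) dμ(q) = ∫_G K(g⁻¹ g', q) U(q) dμ(q). Then K(g, q) = K(e, g⁻¹ q) for all g, q ∈ G. -/

import Mathlib

open MeasureTheory

lemma aux_test_fn_zero
    {G : Type*} [TopologicalSpace G]
    [LocallyCompactSpace G] [T2Space G]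
    [MeasurableSpace G] [BorelSpace G]
    (μ : Measure G) [μ.IsOpenPosMeasure] [IsFiniteMeasureOnCompacts μ]
    (f : G → ℝ) (hf : Continuous f)
    (h : ∀ U : G → ℝ, Continuous U → HasCompactSupport U → ∫ q, f q * U q ∂μ = 0) :
    ∀ x, f x = 0 := by
  have key : ∀ (f : G → ℝ), Continuous f →
      (∀ U : G → ℝ, Continuous U → HasCompactSupport U → ∫ q, f q * U q ∂μ = 0) →
      ∀ x, ¬ (0 < f x) := by
    intro f hf h x hx
    set V : Set G := {y | 0 < f y} with hV
    have hVopen : IsOpen V := isOpen_lt continuous_const hf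
    obtain ⟨U, hU1, hU0, hUc, hUIcc⟩ :=
      exists_continuous_one_zero_of_isCompact (isCompact_singleton (x := x))
        hVopen.isClosed_compl (by simpa using (show x ∈ V from hx))
    have hprod_nonneg : 0 ≤ fun q => f q * U q := by
      intro q
      by_cases hq : q ∈ V
      · exact mul_nonneg (le_of_lt hq) (hUIcc q).1
      · simp [hU0 hq]
    have hprod_ne : f x * U x ≠ 0 := by
      have : U x = 1 := hU1 rfl
      rw [this, mul_one]
      exact ne_of_gt hx
    have hpos : 0 < ∫ q, f q * U q ∂μ :=
      Continuous.integral_pos_of_hasCompactSupport_nonneg_nonzero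
        (hf.mul U.continuous) (hUc.mul_left) hprod_nonneg hprod_ne
    rw [h U U.continuous hUc] at hpos
    exact lt_irrefl 0 hpos
  intro x
  by_contra hne
  rcases lt_or_gt_of_ne hne with hlt | hgt
  · exact key (fun q => -f q) hf.neg
      (fun U hU hUc => by simp [neg_mul, integral_neg, h U hU hUc]) x (by simpa using hlt)
  · exact key f hf h x hgt

/-- A legal (left-invariance-commuting) kernel operator on a locally compact,
second-countable Hausdorff group with left Haar measure has a kernel of the form
`K (g, q) = K (1, g⁻¹ * q)`. -/
theorem kernel_left_invariant
    {G : Type*} [Group G] [TopologicalSpace G] [IsTopologicalGroup G]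
    [LocallyCompactSpace G] [SecondCountableTopology G] [T2Space G]
    [MeasurableSpace G] [BorelSpace G]
    (μ : Measure G) [μ.IsHaarMeasure]
    (K : G × G → ℝ) (hK : Continuous K)
    (hcommute : ∀ U : G → ℝ, Continuous U → HasCompactSupport U → ∀ g g' : G,
      ∫ q, K (g', q) * U (g⁻¹ * q) ∂μ = ∫ q, K (g⁻¹ * g', q) * U q ∂μ) :
    ∀ g q : G, K (g, q) = K (1, g⁻¹ * q) := by
  intro g q
  -- define f s = K (g, g * s) - K (1, s)
  have hKg : Continuous fun s : G => K (g, g * s) :=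
    hK.comp (continuous_const.prodMk (continuous_const.mul continuous_id))
  have hK1 : Continuous fun s : G => K (1, s) :=
    hK.comp (continuous_const.prodMk continuous_id)
  have hzero : ∀ s, (fun s => K (g, g * s) - K (1, s)) s = 0 := by
    apply aux_test_fn_zero μ _ (hKg.sub hK1)
    intro U hU hUc
    have h1 : ∫ s, K (g, g * s) * U s ∂μ = ∫ s, K (1, s) * U s ∂μ := by
      have := MeasureTheory.integral_mul_left_eq_self
        (μ := μ) (fun s => K (g, s) * U (g⁻¹ * s)) g
      simp only [inv_mul_cancel_left] at this
      rw [this]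
      simpa using hcommute U hU hUc g g
    have hint1 : Integrable (fun s => K (g, g * s) * U s) μ :=
      ((hKg.mul hU).integrable_of_hasCompactSupport hUc.mul_left)
    have hint2 : Integrable (fun s => K (1, s) * U s) μ :=
      ((hK1.mul hU).integrable_of_hasCompactSupport hUc.mul_left)
    simp only [Pi.sub_apply, sub_mul]
    rw [integral_sub hint1 hint2, h1, sub_self]
  have := hzero (g⁻¹ * q)
  simp only [mul_inv_cancel_left, sub_eq_zero] at this
  exact this
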